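/- For every fixed x₁ < x₂ < x₃ < x₄ with cross-ratio χ = ((x₂−x₁)(x₄−x₃))/((x₃−x₁)(x₄−x₂)), the following one-sided limits as κ → 8⁻ exist, are finite, and are strictly positive: lim_{κ→8⁻} Z_a^(κ)(x)/(8−κ) = (π/8)·(x₂−x₁)^{1/4}(x₄−x₃)^{1/4}(1−χ)^{1/4}·₂F₁(1/2, 1/2, 1; 1−χ), and lim_{κ→8⁻} Z_b^(κ)(x)/(8−κ) = (π/8)·(x₄−x₁)^{1/4}(x₃−x₂)^{1/4}·χ^{1/4}·₂F₁(1/2, 1/2, 1; χ). In particular, the pure partition functions Z_a^(κ)(x) and Z_b^(κ)(x) tend to zero at rate (8−κ) as κ → 8⁻. -/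

import Mathlib

/-- Rising factorial (Pochhammer symbol) `(q)ₙ = q(q+1)⋯(q+n−1)`. -/
noncomputable def risingFac (q : ℝ) (n : ℕ) : ℝ := ∏ i ∈ Finset.range n, (q + (i : ℝ))

/-- Gauss hypergeometric function `₂F₁(a,b,c;z)`, defined as the sum of its power series. -/
noncomputable def hyp2F1 (a b c z : ℝ) : ℝ :=
  ∑' n : ℕ, risingFac a n * risingFac b n / (risingFac c n * (Nat.factorial n : ℝ)) * z ^ n

/-- Conformal weight `h(κ) = (6−κ)/(2κ)`. -/
noncomputable def hParam (κ : ℝ) : ℝ := (6 - κ) / (2 * κ)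

/-- Loop fugacity `ν(κ) = −2cos(4π/κ)`. -/
noncomputable def nuParam (κ : ℝ) : ℝ := -2 * Real.cos (4 * Real.pi / κ)

/-- Cross-ratio `χ = ((x₂−x₁)(x₄−x₃))/((x₃−x₁)(x₄−x₂))`. -/
noncomputable def crossRatio (x₁ x₂ x₃ x₄ : ℝ) : ℝ :=
  ((x₂ - x₁) * (x₄ - x₃)) / ((x₃ - x₁) * (x₄ - x₂))

/-- Pure partition function `Z_a^(κ)` of multiple SLE_κ (N = 2). -/
noncomputable def Za (κ x₁ x₂ x₃ x₄ : ℝ) : ℝ :=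
  (x₂ - x₁) ^ (-(2 * hParam κ)) * (x₄ - x₃) ^ (-(2 * hParam κ)) *
    (1 - crossRatio x₁ x₂ x₃ x₄) ^ (2 / κ) *
    (hyp2F1 (4/κ) (1 - 4/κ) (8/κ) (1 - crossRatio x₁ x₂ x₃ x₄) /
      hyp2F1 (4/κ) (1 - 4/κ) (8/κ) 1)

/-- Pure partition function `Z_b^(κ)` of multiple SLE_κ (N = 2). -/
noncomputable def Zb (κ x₁ x₂ x₃ x₄ : ℝ) : ℝ :=
  (x₄ - x₁) ^ (-(2 * hParam κ)) * (x₃ - x₂) ^ (-(2 * hParam κ)) *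
    (crossRatio x₁ x₂ x₃ x₄) ^ (2 / κ) *
    (hyp2F1 (4/κ) (1 - 4/κ) (8/κ) (crossRatio x₁ x₂ x₃ x₄) /
      hyp2F1 (4/κ) (1 - 4/κ) (8/κ) 1)

/-- The fused three-point function `Z₃^(κ)(ξ,x₃,x₄)`. -/
noncomputable def Z3 (κ ξ x₃ x₄ : ℝ) : ℝ :=
  (x₄ - x₃) ^ (2/κ) * (x₃ - ξ) ^ (1 - 8/κ) * (x₄ - ξ) ^ (1 - 8/κ) /
    hyp2F1 (4/κ) (1 - 4/κ) (8/κ) 1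



section SLEAux
open Filter Set MeasureTheory

lemma risingFac_zero (q : ℝ) : risingFac q 0 = 1 := by simp [risingFac]

lemma risingFac_succ (q : ℝ) (n : ℕ) : risingFac q (n+1) = risingFac q n * (q + n) := by
  simp [risingFac, Finset.prod_range_succ]

lemma risingFac_pos {q : ℝ} (hq : 0 < q) (n : ℕ) : 0 < risingFac q n :=
  Finset.prod_pos (fun i _ => by positivity)

lemma risingFac_nonneg {q : ℝ} (hq : 0 ≤ q) (n : ℕ) : 0 ≤ risingFac q n :=
  Finset.prod_nonneg (fun i _ => by positivity)

lemma risingFac_one (n : ℕ) : risingFac 1 n = n.factorial := by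
  induction n with
  | zero => simp [risingFac]
  | succ n ih => rw [risingFac_succ, ih]; push_cast [Nat.factorial_succ]; ring

lemma risingFac_le_risingFac {p q : ℝ} (hp : 0 ≤ p) (hpq : p ≤ q) (n : ℕ) :
    risingFac p n ≤ risingFac q n :=
  Finset.prod_le_prod (fun i _ => by positivity) (fun i _ => by linarith)

lemma risingFac_le_factorial {q : ℝ} (hq : 0 ≤ q) (hq1 : q ≤ 1) (n : ℕ) :
    risingFac q n ≤ n.factorial := by
  simpa [risingFac_one] using risingFac_le_risingFac hq hq1 n

lemma ratio_le_one {a : ℝ} (ha : 0 ≤ a) (ha1 : a ≤ 1) (n : ℕ) :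
    risingFac a n / n.factorial ≤ 1 := by
  rw [div_le_one (by positivity)]
  exact risingFac_le_factorial ha ha1 n

lemma ratio_nonneg {a : ℝ} (ha : 0 ≤ a) (n : ℕ) : 0 ≤ risingFac a n / n.factorial := by
  have := risingFac_nonneg ha n; positivity

set_option maxHeartbeats 1000000 in
/-- Binomial series: for `0 < a ≤ 1` and `0 ≤ t < 1`, `∑ (a)ₙ/n! tⁿ = (1-t)^(-a)`. -/
lemma hasSum_binomial {a : ℝ} (ha : 0 < a) (ha1 : a ≤ 1) {t : ℝ} (ht0 : 0 ≤ t) (ht1 : t < 1) :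
    HasSum (fun n : ℕ => risingFac a n / n.factorial * t ^ n) ((1 - t) ^ (-a) : ℝ) := by
  set r : ℝ := (1 + t) / 2 with hr
  have hr0 : 0 < r := by positivity
  have hrt : t < r := by rw [hr]; linarith
  have hr1 : r < 1 := by rw [hr]; linarith
  have hrabs : |r| < 1 := by rw [abs_of_pos hr0]; exact hr1
  set s : Set ℝ := Ioo (-r) r with hs
  have hts : t ∈ s := ⟨by linarith, hrt⟩
  have h0s : (0:ℝ) ∈ s := ⟨by linarith, hr0⟩
  set g : ℕ → ℝ → ℝ := fun n y => risingFac a n / n.factorial * y ^ n with hg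
  set g' : ℕ → ℝ → ℝ := fun n y => risingFac a n / n.factorial * (n * y ^ (n-1)) with hg'
  -- summable bounds
  have hB : Summable (fun n : ℕ => ((n:ℝ)+1) * r ^ n) := by
    have h1 := summable_pow_mul_geometric_of_norm_lt_one 1 hrabs (R := ℝ)
    have h2 := summable_geometric_of_lt_one hr0.le hr1
    simpa [add_mul, pow_one, one_mul] using h1.add h2
  set u : ℕ → ℝ := fun n => (n:ℝ) * r ^ (n-1) with hu
  have hU : Summable u := by
    refine ((hB.mul_left r⁻¹).of_nonneg_of_le (fun n => by positivity) (fun n => ?_))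
    cases n with
    | zero => simp [hu]; positivity
    | succ n =>
      have h1 : u (n+1) = ((n:ℝ)+1) * r ^ n := by simp [hu]
      have h2 : r⁻¹ * ((((n+1:ℕ)):ℝ)+1) * r ^ (n+1) = (((n:ℝ)+1)+1) * r ^ n := by
        push_cast; rw [pow_succ]; field_simp
      rw [h1, ← mul_assoc, h2]
      nlinarith [pow_pos hr0 n]
  have hgderiv : ∀ n (y : ℝ), HasDerivAt (g n) (g' n y) y := fun n y =>
    (hasDerivAt_pow n y).const_mul _
  have hbound : ∀ n (y : ℝ), y ∈ s → ‖g' n y‖ ≤ u n := by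
    intro n y hy
    have hya : |y| ≤ r := by
      rw [abs_le]; exact ⟨(hy.1).le, (hy.2).le⟩
    have h1 : |risingFac a n / n.factorial| ≤ 1 := by
      rw [abs_of_nonneg (ratio_nonneg ha.le n)]; exact ratio_le_one ha.le ha1 n
    have h2 : |y ^ (n-1)| ≤ r ^ (n-1) := by
      rw [abs_pow]; exact pow_le_pow_left₀ (abs_nonneg y) hya _
    calc ‖g' n y‖ = |risingFac a n / n.factorial| * ((n:ℝ) * |y ^ (n-1)|) := by
          simp only [hg', Real.norm_eq_abs, abs_mul, Nat.abs_cast]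
      _ ≤ 1 * ((n:ℝ) * r ^ (n-1)) := by
          refine mul_le_mul h1 (by
            exact mul_le_mul_of_nonneg_left h2 (Nat.cast_nonneg n)) (by positivity) zero_le_one
      _ = u n := by simp [hu]
  have hg0 : Summable fun n => g n 0 := by
    refine summable_of_ne_finset_zero (s := {0}) (fun n hn => ?_)
    have : n ≠ 0 := by simpa using hn
    simp [hg, zero_pow this]
  have hf : ∀ y ∈ s, HasDerivAt (fun z => ∑' n, g n z) (∑' n, g' n y) y := fun y hy =>
    hasDerivAt_tsum_of_isPreconnected hU isOpen_Ioo (convex_Ioo _ _).isPreconnected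
      (fun n z hz => hgderiv n z) hbound h0s hg0 hy
  set f : ℝ → ℝ := fun z => ∑' n, g n z with hfdef
  -- summability of various families at y ∈ s
  have hsummand : ∀ y ∈ s, ∀ (c : ℕ → ℝ), (∀ n, |c n| ≤ (n:ℝ)+1) →
      Summable (fun n => c n * y ^ n) := by
    intro y hy c hc
    refine hB.of_norm_bounded (fun n => ?_)
    have hya : |y| ≤ r := by rw [abs_le]; exact ⟨hy.1.le, hy.2.le⟩
    calc ‖c n * y ^ n‖ = |c n| * |y| ^ n := by rw [norm_mul, norm_pow]; rfl
      _ ≤ ((n:ℝ)+1) * r ^ n := by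
          exact mul_le_mul (hc n) (pow_le_pow_left₀ (abs_nonneg y) hya n) (by positivity)
            (by positivity)
  have hcoef1 : ∀ n : ℕ, |risingFac a n / n.factorial| ≤ (n:ℝ)+1 := fun n => by
    rw [abs_of_nonneg (ratio_nonneg ha.le n)]
    have := ratio_le_one ha.le ha1 n; linarith
  have hcoef2 : ∀ n : ℕ, |risingFac a (n+1) / n.factorial| ≤ (n:ℝ)+1 := by
    intro n
    have h1 : risingFac a (n+1) = risingFac a n * (a + n) := risingFac_succ a n
    have h2 : (0:ℝ) ≤ a + n := by positivity
    have h3 : risingFac a n ≤ n.factorial := risingFac_le_factorial ha.le ha1 n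
    have h4 : (0:ℝ) < n.factorial := by exact_mod_cast n.factorial_pos
    rw [abs_of_nonneg (by have := risingFac_nonneg ha.le (n+1); positivity)]
    rw [h1, div_le_iff₀ h4]
    calc risingFac a n * (a + n) ≤ (n.factorial : ℝ) * (1 + n) :=
        mul_le_mul h3 (by linarith) h2 h4.le
      _ = ((n:ℝ)+1) * n.factorial := by ring
  -- key ODE identity
  have hkey : ∀ y ∈ s, (1 - y) * (∑' n, g' n y) = a * f y := by
    intro y hy
    have hshift : (∑' n, g' n y) = ∑' n, risingFac a (n+1) / n.factorial * y ^ n := by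
      have hsum : Summable (fun n => g' n y) :=
        (hU.of_norm_bounded (fun n => hbound n y hy))
      rw [hsum.tsum_eq_zero_add]
      have h0 : g' 0 y = 0 := by simp [hg']
      rw [h0, zero_add]
      congr 1; funext n
      have : g' (n+1) y = risingFac a (n+1) / n.factorial * y ^ n := by
        simp only [hg', Nat.add_sub_cancel]
        rw [Nat.factorial_succ]
        push_cast
        field_simp
      rw [this]
    rw [hshift]
    set D := ∑' n, risingFac a (n+1) / n.factorial * y ^ n with hD
    have hsD : Summable (fun n => risingFac a (n+1) / n.factorial * y ^ n) :=
      hsummand y hy _ hcoef2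
    have hsF : Summable (fun n => risingFac a n / n.factorial * y ^ n) :=
      hsummand y hy _ hcoef1
    have hyD : y * D = ∑' n, risingFac a (n+1) / n.factorial * y ^ (n+1) := by
      rw [← tsum_mul_left]; congr 1; funext n; ring
    -- A n := D-term minus a*f-term
    have hsub : D - a * f y = ∑' n, (risingFac a (n+1) / n.factorial * y ^ n
        - a * (risingFac a n / n.factorial * y ^ n)) := by
      rw [hsD.tsum_sub (hsF.mul_left a), tsum_mul_left]
    have hA : ∀ n : ℕ, risingFac a (n+1) / n.factorial * y ^ n
        - a * (risingFac a n / n.factorial * y ^ n)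
        = (n:ℝ) * risingFac a n / n.factorial * y ^ n := by
      intro n
      rw [risingFac_succ]
      field_simp
      ring
    have hsA : Summable (fun n : ℕ => (n:ℝ) * risingFac a n / n.factorial * y ^ n) := by
      refine hsummand y hy _ (fun n => ?_)
      have h3 : risingFac a n ≤ n.factorial := risingFac_le_factorial ha.le ha1 n
      have h4 : (0:ℝ) < n.factorial := by exact_mod_cast n.factorial_pos
      have h5 : 0 ≤ risingFac a n := risingFac_nonneg ha.le n
      rw [abs_of_nonneg (by positivity), div_le_iff₀ h4]
      calc (n:ℝ) * risingFac a n ≤ (n:ℝ) * n.factorial :=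
          mul_le_mul_of_nonneg_left h3 (Nat.cast_nonneg n)
        _ ≤ ((n:ℝ)+1) * n.factorial := by nlinarith
    have hAsum : (∑' n : ℕ, (n:ℝ) * risingFac a n / n.factorial * y ^ n) = y * D := by
      rw [hyD, hsA.tsum_eq_zero_add]
      simp only [Nat.cast_zero, zero_mul, zero_div, zero_add]
      congr 1; funext n
      rw [Nat.factorial_succ]
      push_cast
      field_simp
    have : D - a * f y = y * D := by rw [hsub]; simp_rw [hA]; exact hAsum
    linarith
  -- P := (1-y)^a * f y has zero derivative on s
  set P : ℝ → ℝ := fun y => (1 - y) ^ a * f y with hP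
  have hPderiv : ∀ y ∈ s, HasDerivAt P 0 y := by
    intro y hy
    have h1y : (0:ℝ) < 1 - y := by have := hy.2; simp only [hs, mem_Ioo] at hy; linarith
    have hrpow : HasDerivAt (fun z : ℝ => (1 - z) ^ a) (-(a * (1 - y) ^ (a - 1))) y := by
      have h1 : HasDerivAt (fun z : ℝ => 1 - z) (-1) y := by
        simpa using (hasDerivAt_id y).const_sub 1
      have h2 := (Real.hasDerivAt_rpow_const (x := 1 - y) (p := a) (Or.inl h1y.ne'))
      have := h2.comp y h1
      simpa [mul_comm, Function.comp_def] using this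
    have := hrpow.mul (hf y hy)
    have heq : -(a * (1 - y) ^ (a - 1)) * f y + (1 - y) ^ a * (∑' n, g' n y) = 0 := by
      have hsplit : (1 - y) ^ a = (1 - y) ^ (a - 1) * (1 - y) := by
        rw [← Real.rpow_add_one h1y.ne' (a - 1)]; ring_nf
      rw [hsplit, mul_assoc, hkey y hy]
      ring
    rw [heq] at this
    exact this
  -- constancy on [0, t]
  have hsub : Icc (0:ℝ) t ⊆ s := by
    intro x hx
    exact ⟨by linarith [hx.1], by linarith [hx.2]⟩
  have hcont : ContinuousOn P (Icc 0 t) := fun x hx =>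
    ((hPderiv x (hsub hx)).continuousAt).continuousWithinAt
  have hconst := constant_of_has_deriv_right_zero hcont
    (fun x hx => (hPderiv x (hsub (mem_Icc_of_Ico hx))).hasDerivWithinAt)
  have hPt : P t = P 0 := hconst t (right_mem_Icc.2 ht0)
  have hf0 : f 0 = 1 := by
    have h1 : f 0 = ∑' n, g n 0 := rfl
    rw [h1, tsum_eq_single 0 (fun n hn => by simp [hg, zero_pow hn])]
    simp [hg, risingFac_zero]
  have hP0 : P 0 = 1 := by simp [hP, hf0]
  have h1t : (0:ℝ) < 1 - t := by linarith
  have hft : f t = (1 - t) ^ (-a) := by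
    have h1 : (1 - t) ^ a * f t = 1 := hPt.trans hP0
    have hne : (1 - t) ^ a ≠ 0 := (Real.rpow_pos_of_pos h1t a).ne'
    rw [Real.rpow_neg h1t.le]
    have h2 : f t * (1 - t) ^ a = 1 := by linear_combination h1
    exact eq_inv_of_mul_eq_one_left h2
  have hsumt : Summable (fun n => g n t) := hsummand t hts _ hcoef1
  have := hsumt.hasSum
  rwa [show (∑' n, g n t) = (1-t) ^ (-a) from hft] at this

/-- Real Beta integral: integrability and value. -/
lemma betaCore {x y : ℝ} (hx : 0 < x) (hy : 0 < y) :
    IntervalIntegrable (fun t : ℝ => t^(x-1) * (1-t)^(y-1)) volume 0 1 ∧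
    ∫ t in (0:ℝ)..1, t^(x-1) * (1-t)^(y-1)
      = Real.Gamma x * Real.Gamma y / Real.Gamma (x+y) := by
  have hxc : (0:ℝ) < ((x:ℂ)).re := by simpa using hx
  have hyc : (0:ℝ) < ((y:ℂ)).re := by simpa using hy
  have hC := Complex.betaIntegral_convergent hxc hyc
  have hEq : ∀ t ∈ uIcc (0:ℝ) 1,
      ((↑(t^(x-1) * (1-t)^(y-1)) : ℂ)) = (t:ℂ)^((x:ℂ)-1) * ((1:ℂ)-(t:ℂ))^((y:ℂ)-1) := by
    intro t ht
    rw [Set.uIcc_of_le (by norm_num : (0:ℝ) ≤ 1)] at ht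
    have ht0 : 0 ≤ t := ht.1
    have ht1 : 0 ≤ 1 - t := by linarith [ht.2]
    push_cast
    rw [Complex.ofReal_cpow ht0, Complex.ofReal_cpow ht1]
    push_cast
    ring
  -- integrability of the real integrand
  have hmeas : AEStronglyMeasurable (fun t : ℝ => t^(x-1) * (1-t)^(y-1))
      (volume.restrict (Set.uIoc (0:ℝ) 1)) := by
    apply Measurable.aestronglyMeasurable
    fun_prop
  have hInt : IntervalIntegrable (fun t : ℝ => t^(x-1) * (1-t)^(y-1)) volume 0 1 := by
    refine hC.mono_fun hmeas ?_
    rw [Set.uIoc_of_le (by norm_num : (0:ℝ) ≤ 1)]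
    refine (ae_restrict_mem measurableSet_Ioc).mono (fun t ht => ?_)
    have htm : t ∈ uIcc (0:ℝ) 1 := by
      rw [Set.uIcc_of_le (by norm_num : (0:ℝ) ≤ 1)]
      exact ⟨ht.1.le, ht.2⟩
    show ‖t ^ (x - 1) * (1 - t) ^ (y - 1)‖ ≤ ‖(t:ℂ) ^ ((x:ℂ) - 1) * (1 - (t:ℂ)) ^ ((y:ℂ) - 1)‖
    rw [← hEq t htm, Complex.norm_real]
  refine ⟨hInt, ?_⟩
  -- value via complex Beta
  have h1 : ((↑(∫ t in (0:ℝ)..1, t^(x-1) * (1-t)^(y-1)) : ℂ)) = Complex.betaIntegral x y := by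
    rw [← intervalIntegral.integral_ofReal]
    exact intervalIntegral.integral_congr hEq
  have hne : Complex.Gamma ((x:ℂ)+(y:ℂ)) ≠ 0 := by
    refine Complex.Gamma_ne_zero (fun m => ?_)
    intro h
    have h' : x + y = -(m:ℝ) := by exact_mod_cast h
    nlinarith [Nat.cast_nonneg (α := ℝ) m]
  have h2 := Complex.Gamma_mul_Gamma_eq_betaIntegral hxc hyc
  have h3 : Complex.betaIntegral x y
      = Complex.Gamma x * Complex.Gamma y / Complex.Gamma ((x:ℂ)+(y:ℂ)) := by
    rw [eq_div_iff hne]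
    linear_combination -h2
  apply Complex.ofReal_injective
  rw [h1, h3, ← Complex.ofReal_add, Complex.Gamma_ofReal, Complex.Gamma_ofReal,
    Complex.Gamma_ofReal]
  norm_cast

lemma Gamma_risingFac {x : ℝ} (hx : 0 < x) (n : ℕ) :
    Real.Gamma (x + n) = risingFac x n * Real.Gamma x := by
  induction n with
  | zero => simp [risingFac]
  | succ n ih =>
    have h1 : x + ((n:ℝ) + 1) = (x + n) + 1 := by ring
    push_cast
    rw [h1, Real.Gamma_add_one (by positivity), ih, risingFac_succ]
    ring

/-- The real Beta integral over `Ioo 0 1` as a set integral. -/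
lemma betaSet {x y : ℝ} (hx : 0 < x) (hy : 0 < y) :
    (∫ t in Ioo (0:ℝ) 1, t^(x-1) * (1-t)^(y-1))
      = Real.Gamma x * Real.Gamma y / Real.Gamma (x+y) := by
  rw [← MeasureTheory.integral_Ioc_eq_integral_Ioo,
    ← intervalIntegral.integral_of_le (by norm_num : (0:ℝ) ≤ 1)]
  exact (betaCore hx hy).2

lemma betaSetIntegrable {x y : ℝ} (hx : 0 < x) (hy : 0 < y) :
    IntegrableOn (fun t : ℝ => t^(x-1) * (1-t)^(y-1)) (Ioo 0 1) volume := by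
  exact (((betaCore hx hy).1).1).mono_set Ioo_subset_Ioc_self

/-- Gauss's summation theorem. -/
theorem gauss2F1 {a b c : ℝ} (ha : 0 < a) (ha1 : a ≤ 1) (hb : 0 < b) (hcb : b < c)
    (hab : a + b < c) :
    hyp2F1 a b c 1
      = Real.Gamma c * Real.Gamma (c-a-b) / (Real.Gamma (c-a) * Real.Gamma (c-b)) := by
  have hc : 0 < c := lt_trans hb hcb
  have hca : 0 < c - a := by linarith
  have hcb' : 0 < c - b := by linarith
  have hcab : 0 < c - a - b := by linarith
  set w : ℕ → ℝ := fun n => risingFac a n / n.factorial *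
    (Real.Gamma (b+n) * Real.Gamma (c-b) / Real.Gamma (c+n)) with hw
  have hwnonneg : ∀ n, 0 ≤ w n := by
    intro n
    have h1 := risingFac_nonneg ha.le n
    have h2 := Real.Gamma_pos_of_pos (show (0:ℝ) < b + n by positivity)
    have h3 := Real.Gamma_pos_of_pos hcb'
    have h4 := Real.Gamma_pos_of_pos (show (0:ℝ) < c + n by positivity)
    have h5 : (0:ℝ) < n.factorial := by exact_mod_cast n.factorial_pos
    positivity
  set S : ℝ := Real.Gamma b * Real.Gamma (c-a-b) / Real.Gamma (c-a) with hS
  -- each w n as a set integral over Ioo 0 1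
  have hwint : ∀ n : ℕ, w n = ∫ t in Ioo (0:ℝ) 1,
      risingFac a n / n.factorial * (t^(b+n-1) * (1-t)^(c-b-1)) := by
    intro n
    rw [integral_const_mul]
    have hbn : (0:ℝ) < b + n := by positivity
    have := betaSet hbn hcb'
    rw [show b + (n:ℝ) + (c - b) = c + n by ring] at this
    rw [this, hw]
  -- lintegral identity
  set φ : ℕ → ℝ → ℝ := fun n t => risingFac a n / n.factorial * (t^(b+n-1) * (1-t)^(c-b-1))
    with hφ
  have hφmeas : ∀ n : ℕ, Measurable (φ n) := by intro n; fun_prop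
  have hφnonneg : ∀ n : ℕ, ∀ t ∈ Ioo (0:ℝ) 1, 0 ≤ φ n t := by
    intro n t ht
    have h1 := risingFac_nonneg ha.le n
    have h2 : (0:ℝ) < t := ht.1
    have h3 : (0:ℝ) < 1 - t := by linarith [ht.2]
    have h5 : (0:ℝ) < n.factorial := by exact_mod_cast n.factorial_pos
    have := Real.rpow_nonneg h2.le (b+n-1)
    have := Real.rpow_nonneg h3.le (c-b-1)
    positivity
  have hφint : ∀ n : ℕ, IntegrableOn (φ n) (Ioo 0 1) volume := by
    intro n
    have hbn : (0:ℝ) < b + n := by positivity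
    exact (betaSetIntegrable hbn hcb').const_mul _
  -- pointwise sum of φ over n
  have hptsum : ∀ t ∈ Ioo (0:ℝ) 1,
      HasSum (fun n => φ n t) (t^(b-1) * (1-t)^(c-a-b-1)) := by
    intro t ht
    have ht0 : (0:ℝ) < t := ht.1
    have ht1 : t < 1 := ht.2
    have h1t : (0:ℝ) < 1 - t := by linarith
    have hbin := (hasSum_binomial ha ha1 ht0.le ht1).mul_left
      (t^(b-1) * (1-t)^(c-b-1))
    have heq : ∀ n : ℕ, t^(b-1) * (1-t)^(c-b-1) * (risingFac a n / n.factorial * t ^ n)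
        = φ n t := by
      intro n
      show t ^ (b - 1) * (1 - t) ^ (c - b - 1) * (risingFac a n / ↑n.factorial * t ^ n)
        = risingFac a n / ↑n.factorial * (t ^ (b + (n:ℝ) - 1) * (1 - t) ^ (c - b - 1))
      have hpw : t^(b+(n:ℝ)-1) = t^(b-1) * t ^ n := by
        rw [← Real.rpow_natCast t n, ← Real.rpow_add ht0]
        ring_nf
      rw [hpw]
      ring
    have hval : t^(b-1) * (1-t)^(c-b-1) * (1-t)^(-a) = t^(b-1) * (1-t)^(c-a-b-1) := by
      rw [mul_assoc, ← Real.rpow_add h1t]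
      ring_nf
    rw [hval] at hbin
    rw [show (fun n : ℕ => t^(b-1) * (1-t)^(c-b-1) * (risingFac a n / n.factorial * t ^ n))
      = (fun n => φ n t) from funext heq] at hbin
    exact hbin
  -- lintegral computation
  have hbeta2 : (∫ t in Ioo (0:ℝ) 1, t^(b-1) * (1-t)^(c-a-b-1)) = S := by
    have := betaSet hb hcab
    rw [show b + (c - a - b) = c - a by ring] at this
    rw [this, hS]
  have hL : ∑' n, ENNReal.ofReal (w n) = ENNReal.ofReal S := by
    have h1 : ∀ n : ℕ, ENNReal.ofReal (w n) = ∫⁻ t in Ioo (0:ℝ) 1, ENNReal.ofReal (φ n t) := by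
      intro n
      rw [hwint n]
      exact ofReal_integral_eq_lintegral_ofReal (hφint n)
        ((ae_restrict_mem measurableSet_Ioo).mono (hφnonneg n))
    simp_rw [h1]
    rw [← MeasureTheory.lintegral_tsum (fun n => ((hφmeas n).ennreal_ofReal).aemeasurable)]
    have h2 : (∫⁻ t in Ioo (0:ℝ) 1, (∑' n, ENNReal.ofReal (φ n t)))
        = ∫⁻ t in Ioo (0:ℝ) 1, ENNReal.ofReal (t^(b-1) * (1-t)^(c-a-b-1)) := by
      refine setLIntegral_congr_fun measurableSet_Ioo (fun t ht => ?_)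
      have hps := hptsum t ht
      rw [← ENNReal.ofReal_tsum_of_nonneg (fun n => hφnonneg n t ht) hps.summable,
        hps.tsum_eq]
    rw [h2, ← ofReal_integral_eq_lintegral_ofReal (betaSetIntegrable hb hcab)
      ((ae_restrict_mem measurableSet_Ioo).mono (fun t ht => ?_)), hbeta2]
    have h3 : (0:ℝ) < t := ht.1
    have h4 : (0:ℝ) < 1 - t := by linarith [ht.2]
    positivity
  -- extract summability and sum of w
  have hfin : (∑' n, ENNReal.ofReal (w n)) ≠ ⊤ := by rw [hL]; exact ENNReal.ofReal_ne_top
  have hsumw : Summable w := by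
    have h2 := ENNReal.summable_toReal hfin
    simpa [ENNReal.toReal_ofReal, hwnonneg] using h2
  have hSnonneg : 0 ≤ S := by
    have h3 := Real.Gamma_pos_of_pos hb
    have h4 := Real.Gamma_pos_of_pos hcab
    have h5 := Real.Gamma_pos_of_pos hca
    rw [hS]; positivity
  have hsumval : ∑' n, w n = S := by
    have h2 := ENNReal.tsum_toReal_eq (f := fun n => ENNReal.ofReal (w n))
      (fun n => ENNReal.ofReal_ne_top)
    calc ∑' n, w n = ∑' n, (ENNReal.ofReal (w n)).toReal := by
          congr 1; funext n; rw [ENNReal.toReal_ofReal (hwnonneg n)]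
      _ = (∑' n, ENNReal.ofReal (w n)).toReal := h2.symm
      _ = S := by rw [hL, ENNReal.toReal_ofReal hSnonneg]
  -- relate w to the hypergeometric terms
  set K : ℝ := Real.Gamma b * Real.Gamma (c-b) / Real.Gamma c with hK
  have hΓb := Real.Gamma_pos_of_pos hb
  have hΓc := Real.Gamma_pos_of_pos hc
  have hΓcb := Real.Gamma_pos_of_pos hcb'
  have hKpos : 0 < K := by rw [hK]; positivity
  have hwt : ∀ n : ℕ, risingFac a n * risingFac b n / (risingFac c n * n.factorial) * (1:ℝ)^n
      = w n * K⁻¹ := by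
    intro n
    simp only [hw, hK]
    rw [Gamma_risingFac hb n, Gamma_risingFac hc n]
    have h5 : (0:ℝ) < n.factorial := by exact_mod_cast n.factorial_pos
    have h6 := risingFac_pos hc n
    field_simp
    ring
  have hhyp : hyp2F1 a b c 1 = S * K⁻¹ := by
    rw [hyp2F1]
    rw [show (fun n : ℕ => risingFac a n * risingFac b n
        / (risingFac c n * (n.factorial:ℝ)) * (1:ℝ)^n) = (fun n => w n * K⁻¹)
      from funext hwt]
    rw [tsum_mul_right, hsumval]
  rw [hhyp, hS, hK]
  have hΓca := Real.Gamma_pos_of_pos hca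
  have hΓcab := Real.Gamma_pos_of_pos hcab
  field_simp

lemma continuous_risingFac (n : ℕ) : Continuous fun q : ℝ => risingFac q n := by
  unfold risingFac
  exact continuous_finset_prod _ (fun i _ => by continuity)

/-- generic term bound for parameters in the relevant range -/
lemma term_bound {a b c z : ℝ} (ha : 0 ≤ a) (ha1 : a ≤ 1) (hb : 0 ≤ b) (hb1 : b ≤ 1)
    (hc : 1 ≤ c) (hz0 : 0 ≤ z) (hz1 : z < 1) (n : ℕ) :
    |risingFac a n * risingFac b n / (risingFac c n * (Nat.factorial n : ℝ)) * z ^ n|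
      ≤ z ^ n := by
  have h1 : risingFac a n ≤ n.factorial := risingFac_le_factorial ha ha1 n
  have h2 : risingFac b n ≤ n.factorial := risingFac_le_factorial hb hb1 n
  have h3 : (n.factorial : ℝ) ≤ risingFac c n := by
    rw [← risingFac_one]
    exact risingFac_le_risingFac zero_le_one hc n
  have h4 : (0:ℝ) < n.factorial := by exact_mod_cast n.factorial_pos
  have h5 := risingFac_nonneg ha n
  have h6 := risingFac_nonneg hb n
  have h7 : (0:ℝ) < risingFac c n := lt_of_lt_of_le h4 h3
  have hzn : (0:ℝ) ≤ z ^ n := by positivity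
  have hA : risingFac a n * risingFac b n / (risingFac c n * n.factorial) ≤ 1 := by
    rw [div_le_one (by positivity)]
    calc risingFac a n * risingFac b n ≤ (n.factorial : ℝ) * n.factorial :=
          mul_le_mul h1 h2 h6 h4.le
      _ ≤ risingFac c n * n.factorial := by nlinarith
  have hA0 : 0 ≤ risingFac a n * risingFac b n / (risingFac c n * n.factorial) := by
    positivity
  rw [abs_of_nonneg (by positivity)]
  nlinarith

/-- positivity of ₂F₁(1/2,1/2,1;z) -/
lemma hyp_pos {z : ℝ} (hz0 : 0 ≤ z) (hz1 : z < 1) : 0 < hyp2F1 (1/2) (1/2) 1 z := by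
  have hsum : Summable (fun n : ℕ =>
      risingFac (1/2) n * risingFac (1/2) n / (risingFac 1 n * (Nat.factorial n : ℝ)) * z ^ n) := by
    refine (summable_geometric_of_lt_one hz0 hz1).of_norm_bounded (fun n => ?_)
    exact term_bound (by norm_num) (by norm_num) (by norm_num) (by norm_num) le_rfl hz0 hz1 n
  refine hsum.tsum_pos (fun n => ?_) 0 ?_
  · have h1 := risingFac_nonneg (by norm_num : (0:ℝ) ≤ 1/2) n
    have h2 := risingFac_pos (by norm_num : (0:ℝ) < 1) n
    have h4 : (0:ℝ) < n.factorial := by exact_mod_cast n.factorial_pos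
    have hzn : (0:ℝ) ≤ z ^ n := by positivity
    positivity
  · simp [risingFac_zero]

/-- numerator convergence -/
lemma tendsto_num {z : ℝ} (hz0 : 0 ≤ z) (hz1 : z < 1) :
    Tendsto (fun κ : ℝ => hyp2F1 (4/κ) (1 - 4/κ) (8/κ) z) (nhdsWithin 8 (Iio 8))
      (nhds (hyp2F1 (1/2) (1/2) 1 z)) := by
  unfold hyp2F1
  refine tendsto_tsum_of_dominated_convergence (bound := fun n => z ^ n)
    (summable_geometric_of_lt_one hz0 hz1) (fun n => ?_) ?_
  · -- pointwise convergence of each term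
    have h4 : Tendsto (fun κ : ℝ => 4/κ) (nhdsWithin 8 (Iio 8)) (nhds (1/2 : ℝ)) := by
      have : Tendsto (fun κ : ℝ => 4/κ) (nhds 8) (nhds (4/8 : ℝ)) :=
        (tendsto_const_nhds.div tendsto_id (by norm_num))
      norm_num at this
      exact this.mono_left nhdsWithin_le_nhds
    have h8 : Tendsto (fun κ : ℝ => 8/κ) (nhdsWithin 8 (Iio 8)) (nhds (1 : ℝ)) := by
      have : Tendsto (fun κ : ℝ => 8/κ) (nhds 8) (nhds (8/8 : ℝ)) :=
        (tendsto_const_nhds.div tendsto_id (by norm_num))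
      norm_num at this
      exact this.mono_left nhdsWithin_le_nhds
    have h4' : Tendsto (fun κ : ℝ => 1 - 4/κ) (nhdsWithin 8 (Iio 8)) (nhds (1/2 : ℝ)) := by
      have := tendsto_const_nhds.sub h4 (f := fun _ : ℝ => (1:ℝ))
      norm_num at this
      exact this
    have hc1 := (continuous_risingFac n).continuousAt.tendsto.comp h4
    have hc2 := (continuous_risingFac n).continuousAt.tendsto.comp h4'
    have hc3 := (continuous_risingFac n).continuousAt.tendsto.comp h8
    have hden : risingFac 1 n * (n.factorial : ℝ) ≠ 0 := by
      have h2 := risingFac_pos (by norm_num : (0:ℝ) < 1) n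
      have h4 : (0:ℝ) < n.factorial := by exact_mod_cast n.factorial_pos
      positivity
    exact (((hc1.mul hc2).div ((hc3.mul tendsto_const_nhds)) hden).mul tendsto_const_nhds)
  · -- uniform bound
    filter_upwards [Ioo_mem_nhdsLT_of_mem (right_mem_Ioc.mpr (by norm_num : (4:ℝ) < 8))]
      with κ hκ n
    have hκ4 : (4:ℝ) < κ := hκ.1
    have hκ8 : κ < 8 := hκ.2
    have hκ0 : (0:ℝ) < κ := by linarith
    refine term_bound ?_ ?_ ?_ ?_ ?_ hz0 hz1 n
    · positivity
    · rw [div_le_one hκ0]; linarith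
    · have : 4/κ ≤ 1 := by rw [div_le_one hκ0]; linarith
      linarith
    · have : 0 < 4/κ := by positivity
      linarith
    · rw [le_div_iff₀ hκ0]; linarith

lemma Gamma_ne_neg_nat {s : ℝ} (hs : 0 < s) : ∀ m : ℕ, s ≠ -(m:ℝ) := by
  intro m h
  have h0 : (0:ℝ) ≤ (m:ℝ) := Nat.cast_nonneg m
  linarith

lemma hyp1_eq {κ : ℝ} (hκ : κ ∈ Ioo (4:ℝ) 8) :
    hyp2F1 (4/κ) (1 - 4/κ) (8/κ) 1
      = Real.Gamma (8/κ) * Real.Gamma (8/κ - 1)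
        / (Real.Gamma (4/κ) * Real.Gamma (12/κ - 1)) := by
  have hκ4 : (4:ℝ) < κ := hκ.1
  have hκ8 : κ < 8 := hκ.2
  have hκ0 : (0:ℝ) < κ := by linarith
  have ha : 0 < 4/κ := by positivity
  have ha1 : 4/κ ≤ 1 := by rw [div_le_one hκ0]; linarith
  have hb : 0 < 1 - 4/κ := by
    have : 4/κ < 1 := by rw [div_lt_one hκ0]; linarith
    linarith
  have h8 : 1 < 8/κ := by rw [lt_div_iff₀ hκ0]; linarith
  have hcb : 1 - 4/κ < 8/κ := by
    have : 0 < 4/κ := ha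
    linarith
  have hab : 4/κ + (1 - 4/κ) < 8/κ := by linarith
  rw [gauss2F1 ha ha1 hb hcb hab]
  have e1 : 8/κ - 4/κ - (1 - 4/κ) = 8/κ - 1 := by ring
  have e2 : 8/κ - 4/κ = 4/κ := by ring
  have e3 : 8/κ - (1 - 4/κ) = 12/κ - 1 := by ring
  rw [e1, e2, e3]

lemma hyp1_pos {κ : ℝ} (hκ : κ ∈ Ioo (4:ℝ) 8) :
    0 < hyp2F1 (4/κ) (1 - 4/κ) (8/κ) 1 := by
  have hκ4 : (4:ℝ) < κ := hκ.1
  have hκ8 : κ < 8 := hκ.2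
  have hκ0 : (0:ℝ) < κ := by linarith
  rw [hyp1_eq hκ]
  have h1 : 0 < 8/κ := by positivity
  have h2 : 0 < 8/κ - 1 := by
    have : 1 < 8/κ := by rw [lt_div_iff₀ hκ0]; linarith
    linarith
  have h3 : 0 < 4/κ := by positivity
  have h4 : 0 < 12/κ - 1 := by
    have : 1 < 12/κ := by rw [lt_div_iff₀ hκ0]; linarith
    linarith
  have := Real.Gamma_pos_of_pos h1
  have := Real.Gamma_pos_of_pos h2
  have := Real.Gamma_pos_of_pos h3
  have := Real.Gamma_pos_of_pos h4
  positivity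

lemma tendsto_den :
    Tendsto (fun κ : ℝ => (8 - κ) * hyp2F1 (4/κ) (1 - 4/κ) (8/κ) 1) (nhdsWithin 8 (Iio 8))
      (nhds (8 / Real.pi)) := by
  have hG1 : ContinuousAt Real.Gamma 1 :=
    (Real.differentiableAt_Gamma (Gamma_ne_neg_nat one_pos)).continuousAt
  have hGh : ContinuousAt Real.Gamma (1/2) :=
    (Real.differentiableAt_Gamma (Gamma_ne_neg_nat (by norm_num))).continuousAt
  have h8 : Tendsto (fun κ : ℝ => 8/κ) (nhdsWithin 8 (Iio 8)) (nhds (1 : ℝ)) := by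
    have h : Tendsto (fun κ : ℝ => 8/κ) (nhds 8) (nhds (8/8 : ℝ)) :=
      tendsto_const_nhds.div tendsto_id (by norm_num)
    norm_num at h
    exact h.mono_left nhdsWithin_le_nhds
  have h4 : Tendsto (fun κ : ℝ => 4/κ) (nhdsWithin 8 (Iio 8)) (nhds (1/2 : ℝ)) := by
    have h : Tendsto (fun κ : ℝ => 4/κ) (nhds 8) (nhds (4/8 : ℝ)) :=
      tendsto_const_nhds.div tendsto_id (by norm_num)
    norm_num at h
    exact h.mono_left nhdsWithin_le_nhds
  have h12 : Tendsto (fun κ : ℝ => 12/κ - 1) (nhdsWithin 8 (Iio 8)) (nhds (1/2 : ℝ)) := by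
    have h : Tendsto (fun κ : ℝ => 12/κ) (nhds 8) (nhds (12/8 : ℝ)) :=
      tendsto_const_nhds.div tendsto_id (by norm_num)
    have h' := h.sub (tendsto_const_nhds (x := (1:ℝ)))
    norm_num at h'
    exact h'.mono_left nhdsWithin_le_nhds
  have hid : Tendsto (fun κ : ℝ => κ) (nhdsWithin 8 (Iio 8)) (nhds (8:ℝ)) :=
    tendsto_id.mono_left nhdsWithin_le_nhds
  have hπ : Real.Gamma (1/2) * Real.Gamma (1/2) = Real.pi := by
    rw [Real.Gamma_one_half_eq]
    exact Real.mul_self_sqrt Real.pi_pos.le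
  have hne : Real.Gamma (1/2) * Real.Gamma (1/2) ≠ 0 := by
    rw [hπ]; exact Real.pi_ne_zero
  have hG : Tendsto (fun κ : ℝ => κ * Real.Gamma (8/κ) * Real.Gamma (8/κ)
      / (Real.Gamma (4/κ) * Real.Gamma (12/κ - 1))) (nhdsWithin 8 (Iio 8))
      (nhds (8 * Real.Gamma 1 * Real.Gamma 1 / (Real.Gamma (1/2) * Real.Gamma (1/2)))) := by
    exact ((hid.mul (hG1.tendsto.comp h8)).mul (hG1.tendsto.comp h8)).div
      ((hGh.tendsto.comp h4).mul (hGh.tendsto.comp h12)) hne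
  rw [Real.Gamma_one, hπ] at hG
  norm_num at hG
  refine hG.congr' ?_
  filter_upwards [Ioo_mem_nhdsLT_of_mem (right_mem_Ioc.mpr (by norm_num : (4:ℝ) < 8))]
    with κ hκ
  have hκ4 : (4:ℝ) < κ := hκ.1
  have hκ8 : κ < 8 := hκ.2
  have hκ0 : (0:ℝ) < κ := by linarith
  have h81 : 0 < 8/κ - 1 := by
    have : 1 < 8/κ := by rw [lt_div_iff₀ hκ0]; linarith
    linarith
  have hrec : Real.Gamma (8/κ) = (8/κ - 1) * Real.Gamma (8/κ - 1) := by
    have h := Real.Gamma_add_one (ne_of_gt h81)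
    rw [sub_add_cancel] at h
    exact h
  rw [hyp1_eq hκ, hrec]
  have hΓa := Real.Gamma_pos_of_pos (show 0 < 4/κ by positivity)
  have hΓb := Real.Gamma_pos_of_pos (show 0 < 12/κ - 1 by
    have : 1 < 12/κ := by rw [lt_div_iff₀ hκ0]; linarith
    linarith)
  field_simp

lemma key {y1 y2 z : ℝ} (hy1 : 0 < y1) (hy2 : 0 < y2) (hz0 : 0 < z) (hz1 : z < 1) :
    Tendsto (fun κ : ℝ => y1 ^ (-(2 * hParam κ)) * y2 ^ (-(2 * hParam κ)) * z ^ (2/κ) *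
        (hyp2F1 (4/κ) (1 - 4/κ) (8/κ) z / hyp2F1 (4/κ) (1 - 4/κ) (8/κ) 1) / (8 - κ))
      (nhdsWithin 8 (Iio 8))
      (nhds (Real.pi / 8 * y1 ^ ((1:ℝ)/4) * y2 ^ ((1:ℝ)/4) * z ^ ((1:ℝ)/4) *
        hyp2F1 (1/2) (1/2) 1 z)) := by
  have hexpC : ContinuousAt (fun κ : ℝ => -(2 * hParam κ)) 8 := by
    have : ContinuousAt hParam 8 := by
      unfold hParam
      exact ContinuousAt.div (continuousAt_const.sub continuousAt_id)
        (continuousAt_const.mul continuousAt_id) (by norm_num)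
    exact (this.const_mul 2).neg
  have heval : -(2 * hParam 8) = (1:ℝ)/4 := by norm_num [hParam]
  have hexp : Tendsto (fun κ : ℝ => -(2 * hParam κ)) (nhdsWithin 8 (Iio 8))
      (nhds ((1:ℝ)/4)) := by
    have := hexpC.tendsto.mono_left (nhdsWithin_le_nhds (s := Iio (8:ℝ)))
    rwa [heval] at this
  have hP1 : Tendsto (fun κ : ℝ => y1 ^ (-(2 * hParam κ))) (nhdsWithin 8 (Iio 8))
      (nhds (y1 ^ ((1:ℝ)/4))) :=
    (Real.continuousAt_const_rpow hy1.ne').tendsto.comp hexp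
  have hP2 : Tendsto (fun κ : ℝ => y2 ^ (-(2 * hParam κ))) (nhdsWithin 8 (Iio 8))
      (nhds (y2 ^ ((1:ℝ)/4))) :=
    (Real.continuousAt_const_rpow hy2.ne').tendsto.comp hexp
  have h2κ : Tendsto (fun κ : ℝ => 2/κ) (nhdsWithin 8 (Iio 8)) (nhds ((1:ℝ)/4)) := by
    have h : Tendsto (fun κ : ℝ => 2/κ) (nhds 8) (nhds (2/8 : ℝ)) :=
      tendsto_const_nhds.div tendsto_id (by norm_num)
    norm_num at h
    exact h.mono_left nhdsWithin_le_nhds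
  have hP3 : Tendsto (fun κ : ℝ => z ^ (2/κ)) (nhdsWithin 8 (Iio 8))
      (nhds (z ^ ((1:ℝ)/4))) :=
    (Real.continuousAt_const_rpow hz0.ne').tendsto.comp h2κ
  have hnum := tendsto_num hz0.le hz1
  have hden := tendsto_den
  have hlim : (8:ℝ) / Real.pi ≠ 0 := by positivity
  have hmain := ((((hP1.mul hP2).mul hP3).mul hnum).div hden hlim)
  have hval : y1 ^ ((1:ℝ)/4) * y2 ^ ((1:ℝ)/4) * z ^ ((1:ℝ)/4) * hyp2F1 (1/2) (1/2) 1 z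
      / (8 / Real.pi)
      = Real.pi / 8 * y1 ^ ((1:ℝ)/4) * y2 ^ ((1:ℝ)/4) * z ^ ((1:ℝ)/4) *
        hyp2F1 (1/2) (1/2) 1 z := by
    field_simp
  rw [hval] at hmain
  refine hmain.congr' ?_
  filter_upwards [Ioo_mem_nhdsLT_of_mem (right_mem_Ioc.mpr (by norm_num : (4:ℝ) < 8))]
    with κ hκ
  have hD := hyp1_pos hκ
  have h8κ : (8:ℝ) - κ ≠ 0 := by have := hκ.2; intro h; linarith
  show (y1 ^ (-(2 * hParam κ)) * y2 ^ (-(2 * hParam κ)) * z ^ (2/κ)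
      * hyp2F1 (4/κ) (1 - 4/κ) (8/κ) z) / ((8 - κ) * hyp2F1 (4/κ) (1 - 4/κ) (8/κ) 1)
    = y1 ^ (-(2 * hParam κ)) * y2 ^ (-(2 * hParam κ)) * z ^ (2/κ) *
        (hyp2F1 (4/κ) (1 - 4/κ) (8/κ) z / hyp2F1 (4/κ) (1 - 4/κ) (8/κ) 1) / (8 - κ)
  field_simp

end SLEAux

/-- as `κ → 8⁻`, the pure partition functions `Z_a^(κ)` and `Z_b^(κ)`
decay at rate `8−κ`, with explicit, finite, strictly positive limits of
`Z^(κ)/(8−κ)`. -/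
theorem statement2 (x₁ x₂ x₃ x₄ : ℝ) (h12 : x₁ < x₂) (h23 : x₂ < x₃) (h34 : x₃ < x₄) :
    (Filter.Tendsto (fun κ : ℝ => Za κ x₁ x₂ x₃ x₄ / (8 - κ))
        (nhdsWithin 8 (Set.Iio 8))
        (nhds (Real.pi / 8 * (x₂ - x₁) ^ ((1:ℝ)/4) * (x₄ - x₃) ^ ((1:ℝ)/4) *
          (1 - crossRatio x₁ x₂ x₃ x₄) ^ ((1:ℝ)/4) *
          hyp2F1 (1/2) (1/2) 1 (1 - crossRatio x₁ x₂ x₃ x₄))) ∧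
      0 < Real.pi / 8 * (x₂ - x₁) ^ ((1:ℝ)/4) * (x₄ - x₃) ^ ((1:ℝ)/4) *
          (1 - crossRatio x₁ x₂ x₃ x₄) ^ ((1:ℝ)/4) *
          hyp2F1 (1/2) (1/2) 1 (1 - crossRatio x₁ x₂ x₃ x₄)) ∧
    (Filter.Tendsto (fun κ : ℝ => Zb κ x₁ x₂ x₃ x₄ / (8 - κ))
        (nhdsWithin 8 (Set.Iio 8))
        (nhds (Real.pi / 8 * (x₄ - x₁) ^ ((1:ℝ)/4) * (x₃ - x₂) ^ ((1:ℝ)/4) *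
          (crossRatio x₁ x₂ x₃ x₄) ^ ((1:ℝ)/4) *
          hyp2F1 (1/2) (1/2) 1 (crossRatio x₁ x₂ x₃ x₄))) ∧
      0 < Real.pi / 8 * (x₄ - x₁) ^ ((1:ℝ)/4) * (x₃ - x₂) ^ ((1:ℝ)/4) *
          (crossRatio x₁ x₂ x₃ x₄) ^ ((1:ℝ)/4) *
          hyp2F1 (1/2) (1/2) 1 (crossRatio x₁ x₂ x₃ x₄)) := by
  have h13 : x₁ < x₃ := lt_trans h12 h23
  have h24 : x₂ < x₄ := lt_trans h23 h34
  have h14 : x₁ < x₄ := lt_trans h13 h34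
  have hden : 0 < (x₃ - x₁) * (x₄ - x₂) := by nlinarith
  have hχ0 : 0 < crossRatio x₁ x₂ x₃ x₄ := by
    unfold crossRatio
    apply div_pos (by nlinarith) hden
  have hχ1 : crossRatio x₁ x₂ x₃ x₄ < 1 := by
    unfold crossRatio
    rw [div_lt_one hden]
    nlinarith
  have hz0 : 0 < 1 - crossRatio x₁ x₂ x₃ x₄ := by linarith
  have hz1 : 1 - crossRatio x₁ x₂ x₃ x₄ < 1 := by linarith
  refine ⟨⟨?_, ?_⟩, ?_, ?_⟩
  · exact key (sub_pos.2 h12) (sub_pos.2 h34) hz0 hz1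
  · have hF := hyp_pos hz0.le hz1
    have hp1 := Real.rpow_pos_of_pos (sub_pos.2 h12) ((1:ℝ)/4)
    have hp2 := Real.rpow_pos_of_pos (sub_pos.2 h34) ((1:ℝ)/4)
    have hp3 := Real.rpow_pos_of_pos hz0 ((1:ℝ)/4)
    have hπ := Real.pi_pos
    positivity
  · exact key (sub_pos.2 h14) (sub_pos.2 h23) hχ0 hχ1
  · have hF := hyp_pos hχ0.le hχ1
    have hp1 := Real.rpow_pos_of_pos (sub_pos.2 h14) ((1:ℝ)/4)
    have hp2 := Real.rpow_pos_of_pos (sub_pos.2 h23) ((1:ℝ)/4)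
    have hp3 := Real.rpow_pos_of_pos hχ0 ((1:ℝ)/4)
    have hπ := Real.pi_pos
    positivity
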